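/- arXiv:1702.02998 — 2 statements merged into one kernel-verified Lean document; each statement's English description precedes it below -/
import Mathlib

section
/- Let u be a word over the positive integers. Then ė_i(u) is defined if and only if the right strict binary search tree P_sylv(u) contains at least one node labelled i+1 but contains no node labelled i+1 in the right subtree of the topmost node labelled i. -/
/-- Binary trees labelled by elements of `α`. -/
inductive BT (α : Type) : Type
  | leaf : BT α
  | node : BT α → α → BT α → BT α
  deriving DecidableEq

namespace BT

variable {α β : Type}

/-- Map a function over the labels of a tree. -/
def map (f : α → β) : BT α → BT β
  | leaf => leaf
  | node l a r => node (map f l) (f a) (map f r)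

/-- The shape of a labelled tree: its underlying unlabelled tree. -/
def shape : BT α → BT Unit := map (fun _ => ())

/-- The content of a tree: the multiset of its labels. -/
def content : BT α → Multiset α
  | leaf => 0
  | node l a r => a ::ₘ (content l + content r)

/-- Infix (in-order) reading of a labelled tree. -/
def infixRead : BT α → List α
  | leaf => []
  | node l a r => infixRead l ++ a :: infixRead r

/-- Left-to-right postfix (post-order) reading of a labelled tree. -/
def postfixRead : BT α → List α
  | leaf => []
  | node l a r => postfixRead l ++ postfixRead r ++ [a]

/-- Right strict binary search tree: each label is ≥ everything in its left
subtree and < everything in its right subtree. -/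
def IsRBST : BT ℕ+ → Prop
  | leaf => True
  | node l a r =>
      (∀ x ∈ content l, x ≤ a) ∧ (∀ x ∈ content r, a < x) ∧ IsRBST l ∧ IsRBST r

/-- Left strict binary search tree: each label is > everything in its left
subtree and ≤ everything in its right subtree. -/
def IsLBST : BT ℕ+ → Prop
  | leaf => True
  | node l a r =>
      (∀ x ∈ content l, x < a) ∧ (∀ x ∈ content r, a ≤ x) ∧ IsLBST l ∧ IsLBST r

/-- Right strict leaf insertion: `a ≤` root label goes left, else right. -/
def rIns (a : ℕ+) : BT ℕ+ → BT ℕ+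
  | leaf => node leaf a leaf
  | node l x r => if a ≤ x then node (rIns a l) x r else node l x (rIns a r)

/-- Left strict leaf insertion: `a ≥` root label goes right, else left. -/
def lIns (a : ℕ+) : BT ℕ+ → BT ℕ+
  | leaf => node leaf a leaf
  | node l x r => if x ≤ a then node l x (lIns a r) else node (lIns a l) x r

end BT

open BT

/-- The sylvester P-symbol: insert the letters of `u` from right to left via
right strict leaf insertion. -/
def Psylv (u : List ℕ+) : BT ℕ+ := u.foldr rIns .leaf

/-- Left strict insertion of a word, processing letters left to right. -/
def Pltree (u : List ℕ+) : BT ℕ+ := u.foldl (fun t a => lIns a t) .leaf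

/-- Auxiliary fuelled construction of the decreasing tree of a word:
the maximum letter is the root, and the subtrees are built recursively from
the factors to its left and right. -/
def decAux : ℕ → List ℕ+ → BT ℕ+
  | 0, _ => .leaf
  | _ + 1, [] => .leaf
  | n + 1, (a :: l) =>
      let m := (a :: l).foldr max a
      let i := (a :: l).idxOf m
      .node (decAux n ((a :: l).take i)) m (decAux n ((a :: l).drop (i + 1)))

/-- The decreasing tree of a word (with distinct letters). -/
def decTree (u : List ℕ+) : BT ℕ+ := decAux u.length u

/-- Auxiliary fuelled construction of the increasing tree of a word. -/
def incAux : ℕ → List ℕ+ → BT ℕ+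
  | 0, _ => .leaf
  | _ + 1, [] => .leaf
  | n + 1, (a :: l) =>
      let m := (a :: l).foldr min a
      let i := (a :: l).idxOf m
      .node (incAux n ((a :: l).take i)) m (incAux n ((a :: l).drop (i + 1)))

/-- The increasing tree of a word (with distinct letters). -/
def incTree (u : List ℕ+) : BT ℕ+ := incAux u.length u

/-- The standardization of a word: the `j`-th letter `a` is relabelled by the
number of letters smaller than `a` plus the number of occurrences of `a` up to
and including position `j`. -/
def stdWord (u : List ℕ+) : List ℕ+ :=
  u.mapIdx (fun j a =>
    (u.countP (fun b => decide (b < a)) +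
       (u.take (j + 1)).countP (fun b => decide (b = a))).toPNat')

/-- The inverse of a standard word, viewed as a permutation in one-line
notation: the `j`-th letter is the position of `j` in `w`. -/
def invWord (w : List ℕ+) : List ℕ+ :=
  (List.range w.length).map (fun j => (w.idxOf (j + 1).toPNat' + 1).toPNat')

/-- A standard word: a permutation of `1, …, k` in one-line notation. -/
def IsStandard (w : List ℕ+) : Prop :=
  w.Perm ((List.range w.length).map (fun j => (j + 1).toPNat'))

/-- The quasi-Kashiwara raising operator `ė i` is defined on `u`: `u` has no
letter `i+1` to the left of a letter `i`, and `u` contains a letter `i+1`. -/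
def qeDef (i : ℕ+) (u : List ℕ+) : Prop :=
  ¬ List.Sublist [i + 1, i] u ∧ (i + 1) ∈ u

/-- The quasi-Kashiwara lowering operator `ḟ i` is defined on `u`: `u` has no
letter `i+1` to the left of a letter `i`, and `u` contains a letter `i`. -/
def qfDef (i : ℕ+) (u : List ℕ+) : Prop :=
  ¬ List.Sublist [i + 1, i] u ∧ i ∈ u

/-- The action of `ė i`: replace the leftmost letter `i+1` by `i`. -/
def qe (i : ℕ+) (u : List ℕ+) : List ℕ+ := u.set (u.idxOf (i + 1)) i

/-- The action of `ḟ i`: replace the rightmost letter `i` by `i+1`. -/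
def qf (i : ℕ+) (u : List ℕ+) : List ℕ+ :=
  (u.reverse.set (u.reverse.idxOf i) (i + 1)).reverse

/-- The right subtree of the topmost node labelled `i` in a binary search
tree, if any node is labelled `i`. -/
def rightOfTop (i : ℕ+) : BT ℕ+ → Option (BT ℕ+)
  | .leaf => none
  | .node l a r =>
      if a = i then some r else if i < a then rightOfTop i l else rightOfTop i r

namespace BT

theorem mem_content_rIns {x a : ℕ+} {t : BT ℕ+} :
    x ∈ content (rIns a t) ↔ x = a ∨ x ∈ content t := by
  induction t with
  | leaf => simp [rIns, content]
  | node l y r ihl ihr =>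
    rw [rIns]
    split_ifs with h <;> simp [content, ihl, ihr] <;> tauto

theorem isRBST_rIns {a : ℕ+} {t : BT ℕ+} (h : IsRBST t) : IsRBST (rIns a t) := by
  induction t with
  | leaf => exact ⟨by simp [content], by simp [content], trivial, trivial⟩
  | node l y r ihl ihr =>
    obtain ⟨h1, h2, h3, h4⟩ := h
    rw [rIns]
    split_ifs with hle
    · refine ⟨fun x hx => ?_, h2, ihl h3, h4⟩
      rcases mem_content_rIns.1 hx with rfl | hx
      · exact hle
      · exact h1 x hx
    · refine ⟨h1, fun x hx => ?_, h3, ihr h4⟩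
      rcases mem_content_rIns.1 hx with rfl | hx
      · exact lt_of_not_ge hle
      · exact h2 x hx

theorem rightOfTop_eq_none {i : ℕ+} {t : BT ℕ+} (h : IsRBST t) :
    rightOfTop i t = none ↔ i ∉ content t := by
  induction t with
  | leaf => simp [rightOfTop, content]
  | node l a r ihl ihr =>
    obtain ⟨h1, h2, h3, h4⟩ := h
    rw [rightOfTop]
    split_ifs with h5 h6
    · subst h5; simp [content]
    · rw [ihl h3]
      simp only [content, Multiset.mem_cons, Multiset.mem_add]
      constructor
      · rintro hl (hia | hi | hi)
        · exact h5 hia.symm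
        · exact hl hi
        · exact absurd (h2 i hi) (asymm h6)
      · intro hc hi; exact hc (Or.inr (Or.inl hi))
    · have hai : a < i := lt_of_le_of_ne (not_lt.1 h6) (Ne.symm (fun e => h5 e.symm))
      rw [ihr h4]
      simp only [content, Multiset.mem_cons, Multiset.mem_add]
      constructor
      · rintro hr (hia | hi | hi)
        · exact h5 hia.symm
        · exact absurd (h1 i hi) (not_le.2 hai)
        · exact hr hi
      · intro hc hi; exact hc (Or.inr (Or.inr hi))

/-- The "bad" configuration: `i+1` occurs in the right subtree of the topmost
node labelled `i`. -/
def Bad (i : ℕ+) (t : BT ℕ+) : Prop :=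
  ∃ r, rightOfTop i t = some r ∧ (i + 1) ∈ content r

theorem bad_rIns {i b : ℕ+} {t : BT ℕ+} (h : IsRBST t) :
    Bad i (rIns b t) ↔ (b = i + 1 ∧ i ∈ content t) ∨ Bad i t := by
  have hni : ¬ (i + 1 ≤ i) := fun hle => lt_irrefl i (PNat.add_one_le_iff.1 hle)
  induction t with
  | leaf =>
    simp only [rIns, content, Multiset.notMem_zero, and_false, false_or]
    constructor
    · rintro ⟨r, hr, hmem⟩
      rw [rightOfTop] at hr
      split_ifs at hr with h5 h6
      · cases hr; simp [content] at hmem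
      · rw [rightOfTop] at hr; cases hr
      · rw [rightOfTop] at hr; cases hr
    · rintro ⟨r, hr, _⟩; simp [rightOfTop] at hr
  | node l a r ihl ihr =>
    obtain ⟨h1, h2, h3, h4⟩ := h
    rw [rIns]
    split_ifs with hle
    · -- b ≤ a : inserted into the left subtree
      by_cases ha : a = i
      · subst ha
        -- topmost a-node is here; its right subtree unchanged
        have e1 : Bad a (node (rIns b l) a r) ↔ (a + 1) ∈ content r := by
          constructor
          · rintro ⟨r', hr', hm⟩
            rw [rightOfTop, if_pos rfl] at hr'; cases hr'; exact hm
          · intro hm; exact ⟨r, by rw [rightOfTop, if_pos rfl], hm⟩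
        have e2 : Bad a (node l a r) ↔ (a + 1) ∈ content r := by
          constructor
          · rintro ⟨r', hr', hm⟩
            rw [rightOfTop, if_pos rfl] at hr'; cases hr'; exact hm
          · intro hm; exact ⟨r, by rw [rightOfTop, if_pos rfl], hm⟩
        rw [e1, e2]
        have : ¬ (b = a + 1) := fun e => hni (e ▸ hle)
        simp [this]
      · by_cases hia : i < a
        · -- rightOfTop recurses into the left subtree on both sides
          have e1 : Bad i (node (rIns b l) a r) ↔ Bad i (rIns b l) := by
            unfold Bad; rw [rightOfTop, if_neg ha, if_pos hia]
          have e2 : Bad i (node l a r) ↔ Bad i l := by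
            unfold Bad; rw [rightOfTop, if_neg ha, if_pos hia]
          have hmem : i ∈ content (node l a r) ↔ i ∈ content l := by
            simp only [content, Multiset.mem_cons, Multiset.mem_add]
            constructor
            · rintro (rfl | hi | hi)
              · exact absurd rfl ha
              · exact hi
              · exact absurd (h2 i hi) (asymm hia)
            · exact fun hi => Or.inr (Or.inl hi)
          rw [e1, e2]
          exact (ihl h3).trans (by rw [hmem])
        · -- a < i : rightOfTop goes right; right subtree unchanged
          have e1 : Bad i (node (rIns b l) a r) ↔ Bad i r := by
            unfold Bad; rw [rightOfTop, if_neg ha, if_neg hia]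
          have e2 : Bad i (node l a r) ↔ Bad i r := by
            unfold Bad; rw [rightOfTop, if_neg ha, if_neg hia]
          rw [e1, e2]
          have hai : a < i := lt_of_le_of_ne (not_lt.1 hia) ha
          have : ¬ (b = i + 1) := fun e => hni (le_trans (e ▸ hle) hai.le)
          simp [this]
    · -- a < b : inserted into the right subtree
      have hab : a < b := lt_of_not_ge hle
      by_cases ha : a = i
      · subst ha
        have e1 : Bad a (node l a (rIns b r)) ↔ (a + 1) ∈ content (rIns b r) := by
          constructor
          · rintro ⟨r', hr', hm⟩
            rw [rightOfTop, if_pos rfl] at hr'; cases hr'; exact hm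
          · intro hm; exact ⟨rIns b r, by rw [rightOfTop, if_pos rfl], hm⟩
        have e2 : Bad a (node l a r) ↔ (a + 1) ∈ content r := by
          constructor
          · rintro ⟨r', hr', hm⟩
            rw [rightOfTop, if_pos rfl] at hr'; cases hr'; exact hm
          · intro hm; exact ⟨r, by rw [rightOfTop, if_pos rfl], hm⟩
        rw [e1, e2, mem_content_rIns]
        have hmem : a ∈ content (node l a r) := by simp [content]
        constructor
        · rintro (e | hm)
          · exact Or.inl ⟨e.symm, hmem⟩
          · exact Or.inr hm
        · rintro (⟨e, _⟩ | hm)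
          · exact Or.inl e.symm
          · exact Or.inr hm
      · by_cases hia : i < a
        · have e1 : Bad i (node l a (rIns b r)) ↔ Bad i l := by
            unfold Bad; rw [rightOfTop, if_neg ha, if_pos hia]
          have e2 : Bad i (node l a r) ↔ Bad i l := by
            unfold Bad; rw [rightOfTop, if_neg ha, if_pos hia]
          rw [e1, e2]
          have : ¬ (b = i + 1) := by
            rintro rfl
            exact absurd (PNat.lt_add_one_iff.1 hab) (not_le.2 hia)
          simp [this]
        · have hai : a < i := lt_of_le_of_ne (not_lt.1 hia) ha
          have e1 : Bad i (node l a (rIns b r)) ↔ Bad i (rIns b r) := by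
            unfold Bad; rw [rightOfTop, if_neg ha, if_neg hia]
          have e2 : Bad i (node l a r) ↔ Bad i r := by
            unfold Bad; rw [rightOfTop, if_neg ha, if_neg hia]
          have hmem : i ∈ content (node l a r) ↔ i ∈ content r := by
            simp only [content, Multiset.mem_cons, Multiset.mem_add]
            constructor
            · rintro (rfl | hi | hi)
              · exact absurd rfl ha
              · exact absurd (h1 i hi) (not_le.2 hai)
              · exact hi
            · exact fun hi => Or.inr (Or.inr hi)
          rw [e1, e2]
          exact (ihr h4).trans (by rw [hmem])

end BT

theorem isRBST_Psylv (u : List ℕ+) : IsRBST (Psylv u) := by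
  induction u with
  | nil => trivial
  | cons a u ih => exact isRBST_rIns ih

theorem mem_content_Psylv {x : ℕ+} {u : List ℕ+} :
    x ∈ content (Psylv u) ↔ x ∈ u := by
  induction u with
  | nil => simp [Psylv, content]
  | cons a u ih =>
    show x ∈ content (rIns a (Psylv u)) ↔ _
    rw [mem_content_rIns, ih, List.mem_cons]

theorem sublist_iff_bad (i : ℕ+) (u : List ℕ+) :
    List.Sublist [i + 1, i] u ↔ Bad i (Psylv u) := by
  induction u with
  | nil =>
    simp only [List.sublist_nil, Bad]
    constructor
    · intro h; cases h
    · rintro ⟨r, hr, _⟩; rw [Psylv] at hr; cases hr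
  | cons a u ih =>
    have hP : Psylv (a :: u) = rIns a (Psylv u) := rfl
    rw [hP, bad_rIns (isRBST_Psylv u), ← ih, mem_content_Psylv]
    constructor
    · intro h
      cases h with
      | cons _ h => exact Or.inr h
      | cons_cons _ h => exact Or.inl ⟨rfl, List.singleton_sublist.1 h⟩
    · rintro (⟨rfl, hi⟩ | h)
      · exact (List.singleton_sublist.2 hi).cons₂ _
      · exact h.cons _

/-- `ė i` is defined on `u` iff `Psylv u` contains a node labelled `i+1` but no
node labelled `i+1` in the right subtree of the topmost node labelled `i`. -/
theorem qeDef_iff_tree (u : List ℕ+) (i : ℕ+) :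
    qeDef i u ↔
      ((i + 1) ∈ content (Psylv u) ∧
        ∀ r : BT ℕ+, rightOfTop i (Psylv u) = some r →
          (i + 1) ∉ content r) := by
  rw [qeDef, sublist_iff_bad, mem_content_Psylv]
  unfold Bad
  push_neg
  tauto
end

section
/- For any word u over the positive integers, the left recording tree Q computed during left strict insertion of u equals the increasing tree of std(u)⁻¹, and the right recording tree computed during right strict insertion of u equals the decreasing tree of std(u)⁻¹. -/
open BT

/-- Right strict leaf insertion of a (letter, index) pair, comparing letters. -/
def rInsP (p : ℕ+ × ℕ+) : BT (ℕ+ × ℕ+) → BT (ℕ+ × ℕ+)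
  | .leaf => .node .leaf p .leaf
  | .node l x r =>
      if p.1 ≤ x.1 then .node (rInsP p l) x r else .node l x (rInsP p r)

/-- Left strict leaf insertion of a (letter, index) pair, comparing letters. -/
def lInsP (p : ℕ+ × ℕ+) : BT (ℕ+ × ℕ+) → BT (ℕ+ × ℕ+)
  | .leaf => .node .leaf p .leaf
  | .node l x r =>
      if x.1 ≤ p.1 then .node l x (lInsP p r) else .node (lInsP p l) x r

/-- The recording tree of left strict insertion: the node created at step `i`
is labelled `i`. -/
def Qltree (u : List ℕ+) : BT ℕ+ :=
  ((u.mapIdx (fun j a => (a, (j + 1).toPNat'))).foldl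
      (fun t p => lInsP p t) .leaf).map Prod.snd

/-- The recording tree of right strict insertion: the node created when
inserting the letter at position `j` (letters processed right to left) is
labelled `j`. -/
def Qrtree (u : List ℕ+) : BT ℕ+ :=
  ((u.mapIdx (fun j a => (a, (j + 1).toPNat'))).foldr rInsP .leaf).map Prod.snd

section Part1
open List

def klt (x y : ℕ+ × ℕ+) : Prop := x.1 < y.1 ∨ (x.1 = y.1 ∧ x.2 < y.2)

instance kltDec : ∀ x y, Decidable (klt x y) := fun x y => by unfold klt; infer_instance

lemma klt_irrefl (x : ℕ+ × ℕ+) : ¬ klt x x := by simp [klt]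

lemma klt_trans {x y z : ℕ+ × ℕ+} (h1 : klt x y) (h2 : klt y z) : klt x z := by
  rcases h1 with h | ⟨e, h⟩ <;> rcases h2 with h' | ⟨e', h'⟩
  · exact Or.inl (h.trans h')
  · exact Or.inl (e' ▸ h)
  · exact Or.inl (e ▸ h')
  · exact Or.inr ⟨e.trans e', h.trans h'⟩

lemma klt_asymm {x y : ℕ+ × ℕ+} (h1 : klt x y) (h2 : klt y x) : False :=
  klt_irrefl x (klt_trans h1 h2)

lemma klt_total {x y : ℕ+ × ℕ+} (h : x.2 ≠ y.2) : klt x y ∨ klt y x := by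
  rcases lt_trichotomy x.1 y.1 with h1 | h1 | h1
  · exact Or.inl (Or.inl h1)
  · rcases lt_or_gt_of_ne h with h2 | h2
    · exact Or.inl (Or.inr ⟨h1, h2⟩)
    · exact Or.inr (Or.inr ⟨h1.symm, h2⟩)
  · exact Or.inr (Or.inl h1)

lemma klt_iff_le {a p : ℕ+ × ℕ+} (h : a.2 < p.2) : klt a p ↔ a.1 ≤ p.1 := by
  constructor
  · rintro (h' | ⟨e, _⟩)
    · exact h'.le
    · exact e.le
  · intro hle
    rcases lt_or_eq_of_le hle with h' | h'
    · exact Or.inl h'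
    · exact Or.inr ⟨h', h⟩

lemma foldl_lInsP_node (L : List (ℕ+ × ℕ+)) :
    ∀ (l r : BT (ℕ+ × ℕ+)) (a), (∀ x ∈ L, a.2 < x.2) →
    L.foldl (fun t p => lInsP p t) (.node l a r)
      = .node ((L.filter (fun x => decide (klt x a))).foldl (fun t p => lInsP p t) l) a
          ((L.filter (fun x => decide (klt a x))).foldl (fun t p => lInsP p t) r) := by
  induction L with
  | nil => intro l r a _; simp
  | cons x L ih =>
    intro l r a h
    have hx : a.2 < x.2 := h x (mem_cons_self)
    have h' : ∀ y ∈ L, a.2 < y.2 := fun y hy => h y (mem_cons_of_mem x hy)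
    by_cases hc : a.1 ≤ x.1
    · have h1 : klt a x := (klt_iff_le hx).2 hc
      have h2 : ¬ klt x a := fun hk => klt_asymm hk h1
      simp only [foldl_cons, lInsP, if_pos hc, filter_cons, h1, h2,
        decide_eq_true_eq, if_true, if_false]
      rw [ih _ _ _ h']
    · have h2 : ¬ klt a x := fun hk => hc ((klt_iff_le hx).1 hk)
      have h1 : klt x a := (klt_total (fun e => absurd (e ▸ hx) (lt_irrefl _))).resolve_left h2
      simp only [foldl_cons, lInsP, if_neg hc, filter_cons, h1, h2,
        decide_eq_true_eq, if_true, if_false]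
      rw [ih _ _ _ h']

lemma foldl_rInsP_node (L : List (ℕ+ × ℕ+)) :
    ∀ (l r : BT (ℕ+ × ℕ+)) (a), (∀ x ∈ L, x.2 < a.2) →
    L.foldl (fun t p => rInsP p t) (.node l a r)
      = .node ((L.filter (fun x => decide (klt x a))).foldl (fun t p => rInsP p t) l) a
          ((L.filter (fun x => decide (klt a x))).foldl (fun t p => rInsP p t) r) := by
  induction L with
  | nil => intro l r a _; simp
  | cons x L ih =>
    intro l r a h
    have hx : x.2 < a.2 := h x (mem_cons_self)
    have h' : ∀ y ∈ L, y.2 < a.2 := fun y hy => h y (mem_cons_of_mem x hy)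
    by_cases hc : x.1 ≤ a.1
    · have h1 : klt x a := (klt_iff_le hx).2 hc
      have h2 : ¬ klt a x := fun hk => klt_asymm hk h1
      simp only [foldl_cons, rInsP, if_pos hc, filter_cons, h1, h2,
        decide_eq_true_eq, if_true, if_false]
      rw [ih _ _ _ h']
    · have h2 : ¬ klt x a := fun hk => hc ((klt_iff_le hx).1 hk)
      have h1 : klt a x := (klt_total (fun e => absurd (e ▸ hx) (lt_irrefl _))).resolve_left h2
      simp only [foldl_cons, rInsP, if_neg hc, filter_cons, h1, h2,
        decide_eq_true_eq, if_true, if_false]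
      rw [ih _ _ _ h']

end Part1
section Part2
open List

lemma le_foldr_min {α} [LinearOrder α] {b c : α} {s : List α}
    (h : ∀ y ∈ s, b ≤ y) (hc : b ≤ c) : b ≤ s.foldr min c := by
  induction s with
  | nil => exact hc
  | cons x s ih =>
    exact le_min (h x (mem_cons_self)) (ih fun y hy => h y (mem_cons_of_mem x hy))

lemma foldr_min_eq {α} [LinearOrder α] {b c : α} {s : List α}
    (hb : b ∈ s) (h : ∀ y ∈ s, b ≤ y) (hc : b ≤ c) : s.foldr min c = b := by
  induction s with
  | nil => cases hb
  | cons x s ih =>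
    rcases mem_cons.1 hb with rfl | hb'
    · exact min_eq_left (le_foldr_min (fun y hy => h y (mem_cons_of_mem b hy)) hc)
    · rw [foldr_cons, ih hb' (fun y hy => h y (mem_cons_of_mem x hy))]
      exact min_eq_right (h x (mem_cons_self))

lemma foldr_max_le {α} [LinearOrder α] {b c : α} {s : List α}
    (h : ∀ y ∈ s, y ≤ b) (hc : c ≤ b) : s.foldr max c ≤ b := by
  induction s with
  | nil => exact hc
  | cons x s ih =>
    exact max_le (h x (mem_cons_self)) (ih fun y hy => h y (mem_cons_of_mem x hy))

lemma foldr_max_eq {α} [LinearOrder α] {b c : α} {s : List α}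
    (hb : b ∈ s) (h : ∀ y ∈ s, y ≤ b) (hc : c ≤ b) : s.foldr max c = b := by
  induction s with
  | nil => cases hb
  | cons x s ih =>
    rcases mem_cons.1 hb with rfl | hb'
    · exact max_eq_left (foldr_max_le (fun y hy => h y (mem_cons_of_mem b hy)) hc)
    · rw [foldr_cons, ih hb' (fun y hy => h y (mem_cons_of_mem x hy))]
      exact max_eq_right (h x (mem_cons_self))

lemma indexOf_append_cons {α} [DecidableEq α] {b : α} {A : List α} (B : List α)
    (h : b ∉ A) : (A ++ b :: B).idxOf b = A.length := by
  induction A with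
  | nil => simp
  | cons a A ih =>
    have hne : a ≠ b := fun e => h (e ▸ mem_cons_self)
    simp only [cons_append, idxOf_cons, length_cons]
    rw [show (a == b) = false by simp [hne], cond_false, ih (fun hb => h (mem_cons_of_mem a hb))]

lemma incAux_split (n : ℕ) (A B : List ℕ+) (b : ℕ+) (hA : b ∉ A)
    (hmin : ∀ y ∈ A ++ b :: B, b ≤ y) :
    incAux (n+1) (A ++ b :: B) = .node (incAux n A) b (incAux n B) := by
  obtain ⟨c, t, hct⟩ : ∃ c t, A ++ b :: B = c :: t := by
    cases A <;> exact ⟨_, _, rfl⟩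
  have hbmem : b ∈ c :: t := by rw [← hct]; exact mem_append_right A (mem_cons_self)
  have hbd : ∀ y ∈ c :: t, b ≤ y := by rw [← hct]; exact hmin
  have hbc : b ≤ c := hbd c (mem_cons_self)
  have hm : (c :: t).foldr min c = b :=
    foldr_min_eq hbmem hbd hbc
  have hi : (c :: t).idxOf b = A.length := by
    rw [← hct]; exact indexOf_append_cons B hA
  have htake : (c :: t).take A.length = A := by rw [← hct]; exact take_left
  have hdrop : (c :: t).drop (A.length + 1) = B := by
    rw [← hct, show A ++ b :: B = (A ++ [b]) ++ B by simp,
      show A.length + 1 = (A ++ [b]).length by simp]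
    exact drop_left
  rw [hct]
  show BT.node (incAux n ((c :: t).take ((c :: t).idxOf ((c :: t).foldr min c))))
      ((c :: t).foldr min c)
      (incAux n ((c :: t).drop ((c :: t).idxOf ((c :: t).foldr min c) + 1))) = _
  rw [hm, hi, htake, hdrop]

lemma decAux_split (n : ℕ) (A B : List ℕ+) (b : ℕ+) (hA : b ∉ A)
    (hmax : ∀ y ∈ A ++ b :: B, y ≤ b) :
    decAux (n+1) (A ++ b :: B) = .node (decAux n A) b (decAux n B) := by
  obtain ⟨c, t, hct⟩ : ∃ c t, A ++ b :: B = c :: t := by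
    cases A <;> exact ⟨_, _, rfl⟩
  have hbmem : b ∈ c :: t := by rw [← hct]; exact mem_append_right A (mem_cons_self)
  have hbd : ∀ y ∈ c :: t, y ≤ b := by rw [← hct]; exact hmax
  have hbc : c ≤ b := hbd c (mem_cons_self)
  have hm : (c :: t).foldr max c = b :=
    foldr_max_eq hbmem hbd hbc
  have hi : (c :: t).idxOf b = A.length := by
    rw [← hct]; exact indexOf_append_cons B hA
  have htake : (c :: t).take A.length = A := by rw [← hct]; exact take_left
  have hdrop : (c :: t).drop (A.length + 1) = B := by
    rw [← hct, show A ++ b :: B = (A ++ [b]) ++ B by simp,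
      show A.length + 1 = (A ++ [b]).length by simp]
    exact drop_left
  rw [hct]
  show BT.node (decAux n ((c :: t).take ((c :: t).idxOf ((c :: t).foldr max c))))
      ((c :: t).foldr max c)
      (decAux n ((c :: t).drop ((c :: t).idxOf ((c :: t).foldr max c) + 1))) = _
  rw [hm, hi, htake, hdrop]

end Part2
section Part3
open List

lemma filter_eq_self_of (p : ℕ+ × ℕ+ → Prop) [DecidablePred p] {l : List (ℕ+ × ℕ+)}
    (h : ∀ x ∈ l, p x) : l.filter (fun x => decide (p x)) = l :=
  List.filter_eq_self.2 (fun x hx => decide_eq_true (h x hx))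

lemma filter_eq_nil_of (p : ℕ+ × ℕ+ → Prop) [DecidablePred p] {l : List (ℕ+ × ℕ+)}
    (h : ∀ x ∈ l, ¬ p x) : l.filter (fun x => decide (p x)) = [] :=
  List.filter_eq_nil_iff.2 (fun x hx => by simpa using h x hx)

lemma left_main : ∀ (n : ℕ) (L M : List (ℕ+ × ℕ+)), L.length ≤ n →
    L.Pairwise (fun x y => x.2 < y.2) → M.Perm L → M.Pairwise klt →
    (L.foldl (fun t p => lInsP p t) .leaf).map Prod.snd = incAux n (M.map Prod.snd) := by
  intro n
  induction n with
  | zero =>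
    intro L M hL _ hMp _
    have hLnil : L = [] := eq_nil_of_length_eq_zero (Nat.le_zero.1 hL)
    subst hLnil
    have hMnil : M = [] := hMp.eq_nil
    subst hMnil
    simp [incAux, BT.map]
  | succ n ih =>
    intro L M hL hP hMp hMk
    cases L with
    | nil =>
      have hMnil : M = [] := hMp.eq_nil
      subst hMnil
      simp [incAux, BT.map]
    | cons a L' =>
      have ha : ∀ x ∈ L', a.2 < x.2 := (pairwise_cons.1 hP).1
      have hP' : L'.Pairwise (fun x y => x.2 < y.2) := (pairwise_cons.1 hP).2
      have haM : a ∈ M := hMp.mem_iff.2 mem_cons_self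
      obtain ⟨P, Q, hPQ⟩ := append_of_mem haM
      subst hPQ
      have hMk' := hMk
      rw [pairwise_append] at hMk'
      obtain ⟨hkP, hkaQ, hkcross⟩ := hMk'
      have hkQ : Q.Pairwise klt := (pairwise_cons.1 hkaQ).2
      have haQ : ∀ q ∈ Q, klt a q := (pairwise_cons.1 hkaQ).1
      have haP : ∀ p ∈ P, klt p a := fun p hp => hkcross p hp a (mem_cons_self)
      -- members of P and Q are in L'
      have hmemL' : ∀ x ∈ P ++ a :: Q, x ≠ a → x ∈ L' := by
        intro x hx hne
        rcases mem_cons.1 (hMp.subset hx) with h | h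
        · exact absurd h hne
        · exact h
      -- filter computations on M
      have hfP : (P ++ a :: Q).filter (fun x => decide (klt x a)) = P := by
        rw [filter_append, filter_cons]
        rw [filter_eq_self_of _ haP, if_neg (by simp [klt_irrefl a]),
          filter_eq_nil_of _ (fun q hq hk => klt_asymm hk (haQ q hq)), append_nil]
      have hfQ : (P ++ a :: Q).filter (fun x => decide (klt a x)) = Q := by
        rw [filter_append, filter_cons]
        rw [filter_eq_nil_of _ (fun p hp hk => klt_asymm hk (haP p hp)),
          if_neg (by simp [klt_irrefl a]), filter_eq_self_of _ haQ, nil_append]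
      -- perms of filtered lists
      have hpermP : P.Perm (L'.filter (fun x => decide (klt x a))) := by
        have := hMp.filter (fun x => decide (klt x a))
        rwa [hfP, filter_cons, if_neg (by simp [klt_irrefl a])] at this
      have hpermQ : Q.Perm (L'.filter (fun x => decide (klt a x))) := by
        have := hMp.filter (fun x => decide (klt a x))
        rwa [hfQ, filter_cons, if_neg (by simp [klt_irrefl a])] at this
      -- length bounds
      have hlen' : L'.length ≤ n := Nat.succ_le_succ_iff.1 hL
      -- LHS tree structure
      have hstep : ((a :: L').foldl (fun t p => lInsP p t) .leaf) =
          .node ((L'.filter (fun x => decide (klt x a))).foldl (fun t p => lInsP p t) .leaf) a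
            ((L'.filter (fun x => decide (klt a x))).foldl (fun t p => lInsP p t) .leaf) := by
        rw [foldl_cons]
        exact foldl_lInsP_node L' .leaf .leaf a ha
      rw [hstep]
      -- RHS structure
      have hmapM : (P ++ a :: Q).map Prod.snd = P.map Prod.snd ++ a.2 :: Q.map Prod.snd := by
        simp
      have hA : a.2 ∉ P.map Prod.snd := by
        intro hm
        obtain ⟨x, hx, hx2⟩ := mem_map.1 hm
        have hxne : x ≠ a := fun e => klt_irrefl a (e ▸ haP x hx)
        have := ha x (hmemL' x (mem_append_left _ hx) hxne)
        rw [hx2] at this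
        exact lt_irrefl _ this
      have hmin : ∀ y ∈ P.map Prod.snd ++ a.2 :: Q.map Prod.snd, a.2 ≤ y := by
        rw [← hmapM]
        intro y hy
        obtain ⟨x, hx, rfl⟩ := mem_map.1 hy
        by_cases hxa : x = a
        · rw [hxa]
        · exact (ha x (hmemL' x hx hxa)).le
      rw [hmapM, incAux_split n _ _ _ hA hmin]
      rw [BT.map]
      congr 1
      · exact ih _ P ((length_filter_le _ _).trans hlen') (hP'.filter _) hpermP hkP
      · exact ih _ Q ((length_filter_le _ _).trans hlen') (hP'.filter _) hpermQ hkQ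

lemma right_main : ∀ (n : ℕ) (L M : List (ℕ+ × ℕ+)), L.length ≤ n →
    L.Pairwise (fun x y => y.2 < x.2) → M.Perm L → M.Pairwise klt →
    (L.foldl (fun t p => rInsP p t) .leaf).map Prod.snd = decAux n (M.map Prod.snd) := by
  intro n
  induction n with
  | zero =>
    intro L M hL _ hMp _
    have hLnil : L = [] := eq_nil_of_length_eq_zero (Nat.le_zero.1 hL)
    subst hLnil
    have hMnil : M = [] := hMp.eq_nil
    subst hMnil
    simp [decAux, BT.map]
  | succ n ih =>
    intro L M hL hP hMp hMk
    cases L with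
    | nil =>
      have hMnil : M = [] := hMp.eq_nil
      subst hMnil
      simp [decAux, BT.map]
    | cons a L' =>
      have ha : ∀ x ∈ L', x.2 < a.2 := (pairwise_cons.1 hP).1
      have hP' : L'.Pairwise (fun x y => y.2 < x.2) := (pairwise_cons.1 hP).2
      have haM : a ∈ M := hMp.mem_iff.2 mem_cons_self
      obtain ⟨P, Q, hPQ⟩ := append_of_mem haM
      subst hPQ
      have hMk' := hMk
      rw [pairwise_append] at hMk'
      obtain ⟨hkP, hkaQ, hkcross⟩ := hMk'
      have hkQ : Q.Pairwise klt := (pairwise_cons.1 hkaQ).2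
      have haQ : ∀ q ∈ Q, klt a q := (pairwise_cons.1 hkaQ).1
      have haP : ∀ p ∈ P, klt p a := fun p hp => hkcross p hp a (mem_cons_self)
      have hmemL' : ∀ x ∈ P ++ a :: Q, x ≠ a → x ∈ L' := by
        intro x hx hne
        rcases mem_cons.1 (hMp.subset hx) with h | h
        · exact absurd h hne
        · exact h
      have hfP : (P ++ a :: Q).filter (fun x => decide (klt x a)) = P := by
        rw [filter_append, filter_cons]
        rw [filter_eq_self_of _ haP, if_neg (by simp [klt_irrefl a]),
          filter_eq_nil_of _ (fun q hq hk => klt_asymm hk (haQ q hq)), append_nil]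
      have hfQ : (P ++ a :: Q).filter (fun x => decide (klt a x)) = Q := by
        rw [filter_append, filter_cons]
        rw [filter_eq_nil_of _ (fun p hp hk => klt_asymm hk (haP p hp)),
          if_neg (by simp [klt_irrefl a]), filter_eq_self_of _ haQ, nil_append]
      have hpermP : P.Perm (L'.filter (fun x => decide (klt x a))) := by
        have := hMp.filter (fun x => decide (klt x a))
        rwa [hfP, filter_cons, if_neg (by simp [klt_irrefl a])] at this
      have hpermQ : Q.Perm (L'.filter (fun x => decide (klt a x))) := by
        have := hMp.filter (fun x => decide (klt a x))
        rwa [hfQ, filter_cons, if_neg (by simp [klt_irrefl a])] at this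
      have hlen' : L'.length ≤ n := Nat.succ_le_succ_iff.1 hL
      have hstep : ((a :: L').foldl (fun t p => rInsP p t) .leaf) =
          .node ((L'.filter (fun x => decide (klt x a))).foldl (fun t p => rInsP p t) .leaf) a
            ((L'.filter (fun x => decide (klt a x))).foldl (fun t p => rInsP p t) .leaf) := by
        rw [foldl_cons]
        exact foldl_rInsP_node L' .leaf .leaf a ha
      rw [hstep]
      have hmapM : (P ++ a :: Q).map Prod.snd = P.map Prod.snd ++ a.2 :: Q.map Prod.snd := by
        simp
      have hA : a.2 ∉ P.map Prod.snd := by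
        intro hm
        obtain ⟨x, hx, hx2⟩ := mem_map.1 hm
        have hxne : x ≠ a := fun e => klt_irrefl a (e ▸ haP x hx)
        have := ha x (hmemL' x (mem_append_left _ hx) hxne)
        rw [hx2] at this
        exact lt_irrefl _ this
      have hmax : ∀ y ∈ P.map Prod.snd ++ a.2 :: Q.map Prod.snd, y ≤ a.2 := by
        rw [← hmapM]
        intro y hy
        obtain ⟨x, hx, rfl⟩ := mem_map.1 hy
        by_cases hxa : x = a
        · rw [hxa]
        · exact (ha x (hmemL' x hx hxa)).le
      rw [hmapM, decAux_split n _ _ _ hA hmax]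
      rw [BT.map]
      congr 1
      · exact ih _ P ((length_filter_le _ _).trans hlen') (hP'.filter _) hpermP hkP
      · exact ih _ Q ((length_filter_le _ _).trans hlen') (hP'.filter _) hpermQ hkQ

end Part3
section Part4
open List

lemma toPNat'_succ_coe (n : ℕ) : (((n+1).toPNat' : ℕ+) : ℕ) = n + 1 := by
  rw [Nat.toPNat'_coe, if_pos (Nat.succ_pos n)]

lemma toPNat'_succ_lt {n m : ℕ} : (n+1).toPNat' < (m+1).toPNat' ↔ n < m := by
  rw [← PNat.coe_lt_coe, toPNat'_succ_coe, toPNat'_succ_coe]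
  omega

lemma toPNat'_succ_inj {n m : ℕ} (h : (n+1).toPNat' = (m+1).toPNat') : n = m := by
  have := congrArg (fun x : ℕ+ => (x : ℕ)) h
  simp only [toPNat'_succ_coe] at this
  omega

lemma countP_eq_sum {α} (l : List α) (p : α → Bool) :
    l.countP p = ∑ i : Fin l.length, if p (l.get i) then 1 else 0 := by
  induction l with
  | nil => simp
  | cons a l ih =>
    rw [countP_cons, ih]
    simp only [length_cons]
    rw [Fin.sum_univ_succ]
    simp only [get_cons_zero, List.get_cons_succ']
    rw [add_comm]
    congr 1

lemma countP_take_eq_sum {α} (l : List α) (p : α → Bool) (m : ℕ) :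
    (l.take m).countP p = ∑ i : Fin l.length, if p (l.get i) = true ∧ (i : ℕ) < m then 1 else 0 := by
  induction l generalizing m with
  | nil => simp
  | cons a l ih =>
    cases m with
    | zero => simp
    | succ m =>
      rw [take_succ_cons, countP_cons, ih m]
      simp only [length_cons]
      rw [Fin.sum_univ_succ]
      simp only [get_cons_zero, List.get_cons_succ', Fin.val_succ, Fin.val_zero]
      have hc : ∀ i : Fin l.length,
          (if p (l.get i) = true ∧ (i : ℕ) + 1 < m + 1 then (1:ℕ) else 0)
          = (if p (l.get i) = true ∧ (i : ℕ) < m then (1:ℕ) else 0) := by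
        intro i
        congr 1
        simp only [eq_iff_iff]
        constructor <;> (rintro ⟨h1, h2⟩; exact ⟨h1, by omega⟩)
      rw [Finset.sum_congr rfl (fun i _ => hc i)]
      have h0 : ((0:ℕ) < m + 1) := Nat.succ_pos m
      simp only [h0, and_true]
      omega

end Part4
section Part5
open List Function

/-- The pair (letter, position+1) at position `j` of `u`. -/
def pa (u : List ℕ+) (j : Fin u.length) : ℕ+ × ℕ+ := (u.get j, ((j : ℕ) + 1).toPNat')

/-- The number of pairs strictly `klt`-smaller than the pair at `j`. -/
def fC (u : List ℕ+) (j : Fin u.length) : ℕ :=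
  ∑ i : Fin u.length, if klt (pa u i) (pa u j) then 1 else 0

lemma pa_snd_ne (u : List ℕ+) {i j : Fin u.length} (h : i ≠ j) :
    (pa u i).2 ≠ (pa u j).2 := by
  intro e
  exact h (Fin.ext (toPNat'_succ_inj e))

lemma fC_lt (u : List ℕ+) {i j : Fin u.length} (h : klt (pa u i) (pa u j)) :
    fC u i < fC u j := by
  apply Finset.sum_lt_sum
  · intro m _
    by_cases hm : klt (pa u m) (pa u i)
    · rw [if_pos hm, if_pos (klt_trans hm h)]
    · rw [if_neg hm]
      exact Nat.zero_le _
  · refine ⟨i, Finset.mem_univ i, ?_⟩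
    rw [if_neg (klt_irrefl _), if_pos h]
    exact Nat.zero_lt_one

lemma fC_lt_len (u : List ℕ+) (j : Fin u.length) : fC u j < u.length := by
  have : fC u j < ∑ _i : Fin u.length, 1 := by
    apply Finset.sum_lt_sum
    · intro m _
      split <;> omega
    · refine ⟨j, Finset.mem_univ j, ?_⟩
      rw [if_neg (klt_irrefl _)]
      exact Nat.zero_lt_one
  simpa using this

lemma fC_inj (u : List ℕ+) {i j : Fin u.length} (h : fC u i = fC u j) : i = j := by
  by_contra hne
  rcases klt_total (pa_snd_ne u hne) with hk | hk
  · exact absurd h (Nat.ne_of_lt (fC_lt u hk))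
  · exact absurd h.symm (Nat.ne_of_lt (fC_lt u hk))

lemma stdWord_length (u : List ℕ+) : (stdWord u).length = u.length :=
  List.length_mapIdx

lemma stdWord_getElem (u : List ℕ+) (j : ℕ) (hj : j < u.length) :
    (stdWord u)[j]'(by rw [stdWord_length]; exact hj) = (fC u ⟨j, hj⟩ + 1).toPNat' := by
  simp only [stdWord, getElem_mapIdx]
  congr 1
  set a := u[j] with ha
  have hja : u.get ⟨j, hj⟩ = a := rfl
  rw [countP_eq_sum, countP_take_eq_sum]
  simp only [decide_eq_true_eq]
  have key : ∀ i : Fin u.length,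
      (if u.get i < a then (1:ℕ) else 0)
        + (if u.get i = a ∧ (i : ℕ) < j + 1 then (1:ℕ) else 0)
      = (if klt (pa u i) (pa u ⟨j, hj⟩) then (1:ℕ) else 0)
        + (if i = (⟨j, hj⟩ : Fin u.length) then (1:ℕ) else 0) := by
    intro i
    have hklt : klt (pa u i) (pa u ⟨j, hj⟩) ↔
        (u.get i < a ∨ (u.get i = a ∧ (i : ℕ) < j)) := by
      simp only [klt, pa, hja]
      rw [toPNat'_succ_lt]
    by_cases hij : i = (⟨j, hj⟩ : Fin u.length)
    · subst hij
      rw [hja, if_neg (lt_irrefl a),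
        if_pos (⟨rfl, Nat.lt_succ_self _⟩ : a = a ∧ ((⟨j, hj⟩ : Fin u.length) : ℕ) < j + 1),
        if_neg (klt_irrefl _), if_pos rfl]
    · have hvij : (i : ℕ) ≠ j := fun e => hij (Fin.ext e)
      rw [if_neg hij]
      by_cases hlt : u.get i < a
      · rw [if_pos hlt, if_pos (hklt.2 (Or.inl hlt)),
          if_neg (fun h : u.get i = a ∧ (i : ℕ) < j + 1 => absurd (h.1 ▸ hlt) (lt_irrefl a))]
      · rw [if_neg hlt]
        by_cases heq : u.get i = a
        · by_cases hio : (i : ℕ) < j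
          · rw [if_pos (⟨heq, by omega⟩ : u.get i = a ∧ (i : ℕ) < j + 1),
              if_pos (hklt.2 (Or.inr ⟨heq, hio⟩))]
          · rw [if_neg (fun h : u.get i = a ∧ (i : ℕ) < j + 1 => absurd h.2 (by omega)),
              if_neg (fun h => (hklt.1 h).elim hlt (fun h' => hio h'.2))]
        · rw [if_neg (fun h : u.get i = a ∧ (i : ℕ) < j + 1 => heq h.1),
            if_neg (fun h => (hklt.1 h).elim hlt (fun h' => heq h'.1))]
  calc (∑ i : Fin u.length, (if u.get i < a then (1:ℕ) else 0))
        + (∑ i : Fin u.length, (if u.get i = a ∧ (i : ℕ) < j + 1 then (1:ℕ) else 0))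
      = ∑ i : Fin u.length, ((if u.get i < a then (1:ℕ) else 0)
          + (if u.get i = a ∧ (i : ℕ) < j + 1 then (1:ℕ) else 0)) := by
        rw [Finset.sum_add_distrib]
    _ = ∑ i : Fin u.length, ((if klt (pa u i) (pa u ⟨j, hj⟩) then (1:ℕ) else 0)
          + (if i = (⟨j, hj⟩ : Fin u.length) then (1:ℕ) else 0)) :=
        Finset.sum_congr rfl (fun i _ => key i)
    _ = fC u ⟨j, hj⟩ + 1 := by
        rw [Finset.sum_add_distrib, fC, Finset.sum_ite_eq' Finset.univ (⟨j, hj⟩ : Fin u.length)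
          (fun _ => (1:ℕ)), if_pos (Finset.mem_univ _)]

lemma stdWord_nodup (u : List ℕ+) : (stdWord u).Nodup := by
  rw [List.nodup_iff_injective_get]
  intro i j h
  have hi : (i : ℕ) < u.length := by rw [← stdWord_length u]; exact i.2
  have hj : (j : ℕ) < u.length := by rw [← stdWord_length u]; exact j.2
  rw [List.get_eq_getElem, List.get_eq_getElem, stdWord_getElem u i hi, stdWord_getElem u j hj]
    at h
  have := toPNat'_succ_inj h
  have h2 : (⟨(i:ℕ), hi⟩ : Fin u.length) = ⟨(j:ℕ), hj⟩ := fC_inj u (by omega)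
  have hv : (i : ℕ) = (j : ℕ) := by have := congrArg Fin.val h2; simpa using this
  exact Fin.ext hv

end Part5
section Part6
open List Function

lemma exists_M (u : List ℕ+) :
    ∃ M : List (ℕ+ × ℕ+),
      M.Perm (u.mapIdx (fun j a => (a, (j + 1).toPNat')))
      ∧ M.Pairwise klt ∧ M.map Prod.snd = invWord (stdWord u) := by
  classical
  let g : Fin u.length → Fin u.length := fun j => ⟨fC u j, fC_lt_len u j⟩
  have hinj : Function.Injective g := by
    intro i j h
    exact fC_inj u (congrArg Fin.val h)
  have hsurj : Function.Surjective g := Finite.injective_iff_surjective.1 hinj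
  let e : Fin u.length ≃ Fin u.length := Equiv.ofBijective g ⟨hinj, hsurj⟩
  have hfjm : ∀ t : Fin u.length, fC u (e.symm t) = (t : ℕ) := by
    intro t
    have h2 : g (e.symm t) = t := e.apply_symm_apply t
    exact congrArg Fin.val h2
  refine ⟨(finRange u.length).map (fun t => pa u (e.symm t)), ?_, ?_, ?_⟩
  · have hPl : u.mapIdx (fun j a => (a, (j + 1).toPNat')) = (finRange u.length).map (pa u) := by
      apply List.ext_getElem
      · simp
      · intro i h1 h2
        rw [getElem_mapIdx, getElem_map, getElem_finRange]
        rfl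
    rw [hPl]
    have hperm : ((finRange u.length).map e.symm).Perm (finRange u.length) := by
      have hnd : ((finRange u.length).map e.symm).Nodup :=
        List.Nodup.map e.symm.injective (nodup_finRange _)
      have hsub : ((finRange u.length).map e.symm) ⊆ finRange u.length :=
        fun x _ => mem_finRange x
      obtain ⟨l, hl1, hl2⟩ := subperm_of_subset hnd hsub
      have hll : l = finRange u.length := hl2.eq_of_length (by rw [hl1.length_eq]; simp)
      rw [hll] at hl1
      exact hl1.symm
    have h3 := hperm.map (pa u)
    rw [map_map] at h3
    exact h3
  · rw [pairwise_map]
    refine List.Pairwise.imp ?_ (pairwise_lt_finRange u.length)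
    intro t t' hlt
    have hne : e.symm t ≠ e.symm t' := by
      intro h
      exact absurd (e.symm.injective h) (Fin.ne_of_lt hlt)
    rcases klt_total (pa_snd_ne u hne) with hk' | hk'
    · exact hk'
    · exfalso
      have h1 := fC_lt u hk'
      rw [hfjm, hfjm] at h1
      have h2 : (t : ℕ) < (t' : ℕ) := hlt
      omega
  · apply List.ext_getElem
    · simp [invWord, stdWord_length]
    · intro t h1 h2
      have ht : t < u.length := by simpa using h1
      have hLHS : (((finRange u.length).map (fun s => pa u (e.symm s))).map Prod.snd)[t]'(h1)
          = (pa u (e.symm ⟨t, ht⟩)).2 := by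
        rw [getElem_map, getElem_map, getElem_finRange]
        rfl
      have hRHS : (invWord (stdWord u))[t]'(h2)
          = ((stdWord u).idxOf ((t + 1).toPNat') + 1).toPNat' := by
        simp only [invWord, getElem_map, getElem_range]
      rw [hLHS, hRHS]
      set jt := e.symm ⟨t, ht⟩ with hjt
      have hwj : (stdWord u)[(jt : ℕ)]'(by rw [stdWord_length]; exact jt.2)
          = (t + 1).toPNat' := by
        have h0 := stdWord_getElem u (jt : ℕ) jt.2
        rw [show fC u ⟨(jt : ℕ), jt.2⟩ = t from hfjm ⟨t, ht⟩] at h0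
        exact h0
      have hidx : (stdWord u).idxOf ((t + 1).toPNat') = (jt : ℕ) := by
        have h4 := List.Nodup.idxOf_getElem (stdWord_nodup u) (jt : ℕ)
          (by rw [stdWord_length]; exact jt.2)
        rw [hwj] at h4
        exact h4
      rw [hidx]
      rfl

end Part6

theorem recording_trees_eq' (u : List ℕ+) :
    Qltree u = incTree (invWord (stdWord u)) ∧
    Qrtree u = decTree (invWord (stdWord u)) := by
  open List in
  obtain ⟨M, hperm, hpair, hmap⟩ := exists_M u
  set Pl := u.mapIdx (fun j a => (a, (j + 1).toPNat')) with hPl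
  have hPlpair : Pl.Pairwise (fun x y : ℕ+ × ℕ+ => x.2 < y.2) := by
    rw [List.pairwise_iff_getElem]
    intro i j hi hj hij
    simp only [hPl, List.getElem_mapIdx]
    exact toPNat'_succ_lt.2 hij
  have hlenPl : Pl.length = u.length := List.length_mapIdx
  have hinvlen : (invWord (stdWord u)).length = u.length := by
    simp [invWord, stdWord_length]
  constructor
  · have h := left_main u.length Pl M (le_of_eq hlenPl) hPlpair hperm hpair
    rw [hmap] at h
    show (Pl.foldl (fun t a => lInsP a t) .leaf).map Prod.snd = incTree (invWord (stdWord u))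
    rw [incTree, hinvlen]
    exact h
  · have hrev : Pl.foldr rInsP .leaf = Pl.reverse.foldl (fun t p => rInsP p t) .leaf := by
      rw [List.foldl_reverse]
    have hrevpair : Pl.reverse.Pairwise (fun x y : ℕ+ × ℕ+ => y.2 < x.2) := by
      rw [List.pairwise_reverse]
      exact hPlpair
    have h := right_main u.length Pl.reverse M (by simp [hlenPl])
      hrevpair (hperm.trans Pl.reverse_perm.symm) hpair
    rw [hmap] at h
    show (Pl.foldr rInsP .leaf).map Prod.snd = decTree (invWord (stdWord u))
    rw [hrev, decTree, hinvlen]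
    exact h

/-- The left recording tree of `u` is the increasing tree of `std(u)⁻¹`, and
the right recording tree of `u` is the decreasing tree of `std(u)⁻¹`. -/
theorem recording_trees_eq (u : List ℕ+) :
    Qltree u = incTree (invWord (stdWord u)) ∧
    Qrtree u = decTree (invWord (stdWord u)) := by
  exact recording_trees_eq' u
end
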